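/- If a phase automaton A = (Q, ι, δ, φ) is inductive with respect to a transition system TS = (Init, TR), then the set Inv = { σ | ∀ v, ∃ q ∈ Q, σ ∈ φ q v } is an inductive invariant of TS, i.e., Init ⊆ Inv and Inv is closed under TR. -/
import Mathlib

/-- The disjunction of phase characterizations of an inductive phase automaton,
    universally quantified over valuations, is an inductive invariant. -/
theorem inductive_phase_automaton_yields_inductive_invariant
    {S V Q : Type*} [Fintype Q]
    (Init : Set S) (TR : Set (S × S)) (ι : Q)
    (δ : Q → Q → V → Set (S × S)) (φ : Q → V → Set S)
    (hinit : ∀ v, Init ⊆ φ ι v)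
    (hind : ∀ q p v σ σ', σ ∈ φ q v → (σ, σ') ∈ δ q p v → σ' ∈ φ p v)
    (hcov : ∀ q v σ σ', σ ∈ φ q v → (σ, σ') ∈ TR → ∃ p, (σ, σ') ∈ δ q p v) :
    ∀ Inv : Set S, Inv = {σ | ∀ v : V, ∃ q : Q, σ ∈ φ q v} →
      Init ⊆ Inv ∧ (∀ σ σ', (σ, σ') ∈ TR → σ ∈ Inv → σ' ∈ Inv) := by
  rintro Inv rfl
  constructor
  · intro σ hσ v
    exact ⟨ι, hinit v hσ⟩
  · intro σ σ' hTR hσ v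
    obtain ⟨q, hq⟩ := hσ v
    obtain ⟨p, hp⟩ := hcov q v σ σ' hq hTR
    exact ⟨p, hind q p v σ σ' hq hp⟩
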